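/- For n ≥ 3, the family F = {∅} ∪ {{i} : i ∈ [n]} ∪ {{i,j} : i ≠ j ∈ [n]} ∪ {{1,...,i} : 3 ≤ i ≤ n} is induced-butterfly-saturated in B_n; hence isat(n, ⋈) ≤ C(n,2) + 2n - 1. -/

import Mathlib

/-- `X` and `Y` are incomparable under inclusion. -/
def Incomp {n : ℕ} (X Y : Finset (Fin n)) : Prop :=
  ¬ X ⊆ Y ∧ ¬ Y ⊆ X

/-- `F` contains an induced copy of the butterfly poset `⋈` (elements
`A, B, C, D` with `A < B`, `A < D`, `C < B`, `C < D`, `A ∥ C`, `B ∥ D`). -/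
def BowtieCopy {n : ℕ} (F : Finset (Finset (Fin n))) : Prop :=
  ∃ A ∈ F, ∃ B ∈ F, ∃ C ∈ F, ∃ D ∈ F,
    A ⊂ B ∧ A ⊂ D ∧ C ⊂ B ∧ C ⊂ D ∧ Incomp A C ∧ Incomp B D

/-- `F` is induced-`⋈`-saturated in `B_n`. -/
def BowtieSaturated {n : ℕ} (F : Finset (Finset (Fin n))) : Prop :=
  ¬ BowtieCopy F ∧ ∀ S ∉ F, BowtieCopy (insert S F)

def Fam (n : ℕ) : Finset (Finset (Fin n)) :=
  ({∅} : Finset (Finset (Fin n))) ∪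
        (Finset.univ.image fun i : Fin n => ({i} : Finset (Fin n))) ∪
        (((Finset.univ ×ˢ Finset.univ).filter fun p : Fin n × Fin n => p.1 ≠ p.2).image
          fun p => ({p.1, p.2} : Finset (Fin n))) ∪
        ((Finset.univ.filter fun i : Fin n => 2 ≤ (i : ℕ)).image
          fun i => Finset.Iic i)

lemma mem_Fam {n : ℕ} (X : Finset (Fin n)) :
    X ∈ Fam n ↔ X = ∅ ∨ (∃ i, X = {i}) ∨ (∃ x y : Fin n, x ≠ y ∧ X = {x, y}) ∨
      (∃ k : Fin n, 2 ≤ (k : ℕ) ∧ X = Finset.Iic k) := by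
  simp only [Fam, Finset.mem_union, Finset.mem_singleton, Finset.mem_image,
    Finset.mem_filter, Finset.mem_univ, true_and, Finset.mem_product, Prod.exists]
  constructor
  · rintro (((h | ⟨i, h⟩) | ⟨x, y, hxy, h⟩) | ⟨k, hk, h⟩)
    · exact Or.inl h
    · exact Or.inr (Or.inl ⟨i, h.symm⟩)
    · exact Or.inr (Or.inr (Or.inl ⟨x, y, hxy, h.symm⟩))
    · exact Or.inr (Or.inr (Or.inr ⟨k, hk, h.symm⟩))
  · rintro (h | ⟨i, h⟩ | ⟨x, y, hxy, h⟩ | ⟨k, hk, h⟩)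
    · exact Or.inl (Or.inl (Or.inl h))
    · exact Or.inl (Or.inl (Or.inr ⟨i, h.symm⟩))
    · exact Or.inl (Or.inr ⟨x, y, hxy, h.symm⟩)
    · exact Or.inr ⟨k, hk, h.symm⟩

lemma no_copy {n : ℕ} : ¬ BowtieCopy (Fam n) := by
  rintro ⟨A, hA, B, hB, C, hC, D, hD, hAB, hAD, hCB, hCD, ⟨hAC1, hAC2⟩, hBD1, hBD2⟩
  obtain ⟨a, haA, haC⟩ := Finset.not_subset.mp hAC1
  obtain ⟨c, hcC, hcA⟩ := Finset.not_subset.mp hAC2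
  have hac : a ≠ c := fun h => haC (h ▸ hcC)
  have haB : a ∈ B := hAB.subset haA
  have hcB : c ∈ B := hCB.subset hcC
  have haD : a ∈ D := hAD.subset haA
  have hcD : c ∈ D := hCD.subset hcC
  have key : ∀ X : Finset (Fin n), X ∈ Fam n → a ∈ X → c ∈ X →
      (∃ k : Fin n, X = Finset.Iic k) ∨ X = {a, c} := by
    intro X hX haX hcX
    rcases (mem_Fam X).mp hX with rfl | ⟨i, rfl⟩ | ⟨x, y, hxy, rfl⟩ | ⟨k, hk, rfl⟩
    · simp at haX
    · simp only [Finset.mem_singleton] at haX hcX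
      exact absurd (haX.trans hcX.symm) hac
    · right
      simp only [Finset.mem_insert, Finset.mem_singleton] at haX hcX
      rcases haX with rfl | rfl <;> rcases hcX with rfl | rfl
      · exact absurd rfl hac
      · rfl
      · ext z; simp only [Finset.mem_insert, Finset.mem_singleton]; tauto
      · exact absurd rfl hac
    · exact Or.inl ⟨k, rfl⟩
  have hsub : ({a, c} : Finset (Fin n)) ⊆ B := by
    intro z hz; simp only [Finset.mem_insert, Finset.mem_singleton] at hz
    rcases hz with rfl | rfl; exacts [haB, hcB]
  have hsubD : ({a, c} : Finset (Fin n)) ⊆ D := by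
    intro z hz; simp only [Finset.mem_insert, Finset.mem_singleton] at hz
    rcases hz with rfl | rfl; exacts [haD, hcD]
  rcases key B hB haB hcB with ⟨kB, rfl⟩ | rfl
  · rcases key D hD haD hcD with ⟨kD, rfl⟩ | rfl
    · rcases le_total kB kD with h | h
      · exact hBD1 (Finset.Iic_subset_Iic.mpr h)
      · exact hBD2 (Finset.Iic_subset_Iic.mpr h)
    · exact hBD2 hsub
  · exact hBD1 hsubD

lemma insert_copy {n : ℕ} (hn : 3 ≤ n) (S : Finset (Fin n)) (hS : S ∉ Fam n) :
    BowtieCopy (insert S (Fam n)) := by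
  have hcard : 3 ≤ S.card := by
    by_contra h
    push_neg at h
    interval_cases hc : S.card
    · exact hS ((mem_Fam S).mpr (Or.inl (Finset.card_eq_zero.mp hc)))
    · obtain ⟨i, rfl⟩ := Finset.card_eq_one.mp hc
      exact hS ((mem_Fam _).mpr (Or.inr (Or.inl ⟨i, rfl⟩)))
    · obtain ⟨x, y, hxy, rfl⟩ := Finset.card_eq_two.mp hc
      exact hS ((mem_Fam _).mpr (Or.inr (Or.inr (Or.inl ⟨x, y, hxy, rfl⟩))))
  have hSne : S.Nonempty := Finset.card_pos.mp (by omega)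
  have hSIic : ∀ k : Fin n, S ≠ Finset.Iic k := by
    intro k hk
    by_cases h2 : 2 ≤ (k : ℕ)
    · exact hS ((mem_Fam _).mpr (Or.inr (Or.inr (Or.inr ⟨k, h2, hk⟩))))
    · have : S.card = (k : ℕ) + 1 := by rw [hk, Fin.card_Iic]
      omega
  have hcompl : (Sᶜ).Nonempty := by
    rw [Finset.nonempty_iff_ne_empty]
    intro h
    have hsu : S = Finset.univ := by rwa [Finset.compl_eq_empty_iff] at h
    apply hSIic ⟨n - 1, by omega⟩
    rw [hsu]; ext x
    have hx := x.isLt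
    simp only [Finset.mem_univ, Finset.mem_Iic, true_iff, Fin.le_def]
    omega
  set i := (Sᶜ).min' hcompl with hidef
  have hiS : i ∉ S := by
    have := Finset.min'_mem _ hcompl; simpa using this
  have hilow : ∀ j : Fin n, j < i → j ∈ S := by
    intro j hj
    by_contra hjS
    have : i ≤ j := Finset.min'_le _ _ (by simpa using hjS)
    exact absurd hj (not_lt.mpr this)
  set t1 := S.max' hSne with ht1def
  have ht1S : t1 ∈ S := S.max'_mem hSne
  have hle_t1 : ∀ x ∈ S, x ≤ t1 := fun x hx => S.le_max' x hx
  have h1 : (S.erase t1).Nonempty := by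
    rw [← Finset.card_pos, Finset.card_erase_of_mem ht1S]; omega
  set t2 := (S.erase t1).max' h1 with ht2def
  have ht2m : t2 ∈ S.erase t1 := Finset.max'_mem _ h1
  have ht2S : t2 ∈ S := Finset.mem_of_mem_erase ht2m
  have ht2ne : t2 ≠ t1 := Finset.ne_of_mem_erase ht2m
  have ht2lt : t2 < t1 := lt_of_le_of_ne (hle_t1 _ ht2S) ht2ne
  have h2 : ((S.erase t1).erase t2).Nonempty := by
    rw [← Finset.card_pos, Finset.card_erase_of_mem ht2m, Finset.card_erase_of_mem ht1S]
    omega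
  set t3 := ((S.erase t1).erase t2).max' h2 with ht3def
  have ht3m : t3 ∈ (S.erase t1).erase t2 := Finset.max'_mem _ h2
  have ht3S : t3 ∈ S := Finset.mem_of_mem_erase (Finset.mem_of_mem_erase ht3m)
  have ht3ne2 : t3 ≠ t2 := Finset.ne_of_mem_erase ht3m
  have ht3le : t3 ≤ t2 := Finset.le_max' _ _ (Finset.mem_of_mem_erase ht3m)
  have ht3lt : t3 < t2 := lt_of_le_of_ne ht3le ht3ne2
  have hi_lt : i < t1 := by
    rcases lt_trichotomy i t1 with h | h | h
    · exact h
    · exact absurd (h ▸ ht1S) hiS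
    · exfalso
      apply hSIic t1
      ext x
      simp only [Finset.mem_Iic]
      constructor
      · exact fun hx => hle_t1 x hx
      · intro hx
        rcases lt_or_eq_of_le hx with h' | h'
        · exact hilow x (h'.trans h)
        · exact h' ▸ ht1S
  set k : Fin n := max i t2 with hkdef
  have hik : i ≤ k := le_max_left _ _
  have ht2k : t2 ≤ k := le_max_right _ _
  have hkt1 : k < t1 := max_lt hi_lt ht2lt
  have hk2 : 2 ≤ (k : ℕ) := by
    by_contra h
    push_neg at h
    have hi2 : (i : ℕ) < 2 := lt_of_le_of_lt hik h
    have ht22 : (t2 : ℕ) < 2 := lt_of_le_of_lt ht2k h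
    have ht32 : (t3 : ℕ) < (t2 : ℕ) := ht3lt
    have ht30 : (t3 : ℕ) = 0 := by omega
    have ht21 : (t2 : ℕ) = 1 := by omega
    have : i = t3 ∨ i = t2 := by
      rcases Nat.lt_or_ge (i : ℕ) 1 with h' | h'
      · exact Or.inl (Fin.ext (by omega))
      · exact Or.inr (Fin.ext (by omega))
    rcases this with h' | h'
    · exact hiS (h' ▸ ht3S)
    · exact hiS (h' ▸ ht2S)
  have hine3 : i ≠ t3 := fun h => hiS (h ▸ ht3S)
  have hine2 : i ≠ t2 := fun h => hiS (h ▸ ht2S)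
  refine ⟨{t3}, Finset.mem_insert_of_mem ((mem_Fam _).mpr (Or.inr (Or.inl ⟨t3, rfl⟩))),
    S, Finset.mem_insert_self _ _,
    {t2}, Finset.mem_insert_of_mem ((mem_Fam _).mpr (Or.inr (Or.inl ⟨t2, rfl⟩))),
    Finset.Iic k, Finset.mem_insert_of_mem
      ((mem_Fam _).mpr (Or.inr (Or.inr (Or.inr ⟨k, hk2, rfl⟩)))),
    ?_, ?_, ?_, ?_, ?_, ?_⟩
  · refine (Finset.ssubset_iff_of_subset (Finset.singleton_subset_iff.mpr ht3S)).mpr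
      ⟨t1, ht1S, ?_⟩
    simp only [Finset.mem_singleton]
    exact (ne_of_lt (ht3lt.trans ht2lt)).symm
  · refine (Finset.ssubset_iff_of_subset (Finset.singleton_subset_iff.mpr
      (Finset.mem_Iic.mpr (ht3le.trans ht2k)))).mpr ⟨i, Finset.mem_Iic.mpr hik, ?_⟩
    simp only [Finset.mem_singleton]
    exact hine3
  · refine (Finset.ssubset_iff_of_subset (Finset.singleton_subset_iff.mpr ht2S)).mpr
      ⟨t1, ht1S, ?_⟩
    simp only [Finset.mem_singleton]
    exact (ne_of_lt ht2lt).symm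
  · refine (Finset.ssubset_iff_of_subset (Finset.singleton_subset_iff.mpr
      (Finset.mem_Iic.mpr ht2k))).mpr ⟨i, Finset.mem_Iic.mpr hik, ?_⟩
    simp only [Finset.mem_singleton]
    exact hine2
  · constructor
    · simp only [Finset.singleton_subset_iff, Finset.mem_singleton]
      exact ht3ne2
    · simp only [Finset.singleton_subset_iff, Finset.mem_singleton]
      exact ht3ne2.symm
  · constructor
    · intro h
      have := Finset.mem_Iic.mp (h ht1S)
      exact absurd this (not_le.mpr hkt1)
    · intro h
      exact hiS (h (Finset.mem_Iic.mpr hik))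

lemma Fam_card {n : ℕ} (hn : 3 ≤ n) : (Fam n).card ≤ n.choose 2 + 2 * n - 1 := by
  have hA : ({∅} : Finset (Finset (Fin n))).card = 1 := Finset.card_singleton _
  have hB : ((Finset.univ.image fun i : Fin n => ({i} : Finset (Fin n)))).card ≤ n := by
    refine le_trans Finset.card_image_le ?_
    rw [Finset.card_univ, Fintype.card_fin]
  have hC : (((Finset.univ ×ˢ Finset.univ).filter fun p : Fin n × Fin n => p.1 ≠ p.2).image
      fun p => ({p.1, p.2} : Finset (Fin n))).card ≤ n.choose 2 := by
    have hsub : (((Finset.univ ×ˢ Finset.univ).filter fun p : Fin n × Fin n => p.1 ≠ p.2).image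
        fun p => ({p.1, p.2} : Finset (Fin n))) ⊆ Finset.univ.powersetCard 2 := by
      intro X hX
      simp only [Finset.mem_image, Finset.mem_filter] at hX
      obtain ⟨p, ⟨_, hne⟩, rfl⟩ := hX
      rw [Finset.mem_powersetCard]
      exact ⟨Finset.subset_univ _, Finset.card_pair hne⟩
    calc _ ≤ (Finset.univ.powersetCard 2).card := Finset.card_le_card hsub
      _ = n.choose 2 := by rw [Finset.card_powersetCard, Finset.card_univ, Fintype.card_fin]
  have hD : ((Finset.univ.filter fun i : Fin n => 2 ≤ (i : ℕ)).image
      fun i => Finset.Iic i).card ≤ n - 2 := by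
    refine le_trans Finset.card_image_le ?_
    have h : (Finset.univ.filter fun i : Fin n => 2 ≤ (i : ℕ)).card ≤ (Finset.Ico 2 n).card := by
      apply Finset.card_le_card_of_injOn Fin.val
      · intro a ha
        simp only [Finset.mem_coe, Finset.mem_filter, Finset.mem_univ, true_and] at ha
        simp only [Finset.mem_coe, Finset.mem_Ico]
        exact ⟨ha, a.isLt⟩
      · intro a _ b _ h
        exact Fin.ext h
    simpa [Nat.card_Ico] using h
  have := Finset.card_union_le
    (({∅} : Finset (Finset (Fin n))) ∪
      (Finset.univ.image fun i : Fin n => ({i} : Finset (Fin n))) ∪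
      (((Finset.univ ×ˢ Finset.univ).filter fun p : Fin n × Fin n => p.1 ≠ p.2).image
        fun p => ({p.1, p.2} : Finset (Fin n))))
    ((Finset.univ.filter fun i : Fin n => 2 ≤ (i : ℕ)).image fun i => Finset.Iic i)
  have h2 := Finset.card_union_le
    (({∅} : Finset (Finset (Fin n))) ∪
      (Finset.univ.image fun i : Fin n => ({i} : Finset (Fin n))))
    (((Finset.univ ×ˢ Finset.univ).filter fun p : Fin n × Fin n => p.1 ≠ p.2).image
      fun p => ({p.1, p.2} : Finset (Fin n)))
  have h3 := Finset.card_union_le (({∅} : Finset (Finset (Fin n))))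
    (Finset.univ.image fun i : Fin n => ({i} : Finset (Fin n)))
  have htot : (Fam n).card ≤ 1 + n + n.choose 2 + (n - 2) := by
    unfold Fam
    omega
  omega

/-- For `n ≥ 3`, the family consisting of `∅`, all singletons, all pairs, and
all initial segments `{1, …, i}` with `i ≥ 3` is induced-butterfly-saturated;
hence `isat(n, ⋈) ≤ C(n,2) + 2n - 1`. -/
theorem stmt11 {n : ℕ} (hn : 3 ≤ n) :
    BowtieSaturated (({∅} : Finset (Finset (Fin n))) ∪
        (Finset.univ.image fun i : Fin n => ({i} : Finset (Fin n))) ∪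
        (((Finset.univ ×ˢ Finset.univ).filter fun p : Fin n × Fin n => p.1 ≠ p.2).image
          fun p => ({p.1, p.2} : Finset (Fin n))) ∪
        ((Finset.univ.filter fun i : Fin n => 2 ≤ (i : ℕ)).image
          fun i => Finset.Iic i)) ∧
    sInf {m | ∃ F : Finset (Finset (Fin n)), BowtieSaturated F ∧ F.card = m}
      ≤ n.choose 2 + 2 * n - 1 := by
  have hsat : BowtieSaturated (Fam n) := ⟨no_copy, fun S hS => insert_copy hn S hS⟩
  refine ⟨hsat, ?_⟩
  have hmem : (Fam n).card ∈ {m | ∃ F : Finset (Finset (Fin n)), BowtieSaturated F ∧ F.card = m} :=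
    ⟨Fam n, hsat, rfl⟩
  exact le_trans (Nat.sInf_le hmem) (Fam_card hn)
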